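/- Let $1 \le q < s$, $1 \le r \le s$, $2 \le q$, and suppose the Banach space $X$ has cotype $q$. Then every weakly $1$-summable sequence in $X$ is anisotropic $(s,q,r)$-summable. -/
import Mathlib


open scoped BigOperators NNReal ENNReal

noncomputable section

/-- `(xs k)` belongs to `ℓ_r(X*)`. -/
def MemLr (r : ℝ) {X : Type*} [NormedAddCommGroup X] [NormedSpace ℝ X]
    (xs : ℕ → X →L[ℝ] ℝ) : Prop :=
  Summable fun k => ‖xs k‖ ^ r

/-- The `ℓ_r(X*)` norm. -/
noncomputable def lrNorm (r : ℝ) {X : Type*} [NormedAddCommGroup X] [NormedSpace ℝ X]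
    (xs : ℕ → X →L[ℝ] ℝ) : ℝ :=
  (∑' k, ‖xs k‖ ^ r) ^ (1 / r)

/-- Weakly `q`-summable sequences. -/
def WeaklySummable (q : ℝ) {X : Type*} [NormedAddCommGroup X] [NormedSpace ℝ X]
    (x : ℕ → X) : Prop :=
  ∀ f : X →L[ℝ] ℝ, Summable fun j => |f (x j)| ^ q

/-- The weak `ℓ_q` norm. -/
noncomputable def weakNorm (q : ℝ) {X : Type*} [NormedAddCommGroup X] [NormedSpace ℝ X]
    (x : ℕ → X) : ℝ :=
  ⨆ f : {f : X →L[ℝ] ℝ // ‖f‖ ≤ 1}, (∑' j, |f.1 (x j)| ^ q) ^ (1 / q)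

/-- Anisotropic `(s,q,r)`-summable sequences. -/
def AnisoSummable (s q r : ℝ) {X : Type*} [NormedAddCommGroup X] [NormedSpace ℝ X]
    (x : ℕ → X) : Prop :=
  ∀ xs : ℕ → X →L[ℝ] ℝ, MemLr r xs →
    (∀ j, Summable fun k => |xs k (x j)| ^ s) ∧
      Summable fun j => (∑' k, |xs k (x j)| ^ s) ^ (q / s)

/-- The anisotropic `(s,q,r)` norm. -/
noncomputable def anisoNorm (s q r : ℝ) {X : Type*} [NormedAddCommGroup X] [NormedSpace ℝ X]
    (x : ℕ → X) : ℝ :=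
  ⨆ xs : {xs : ℕ → X →L[ℝ] ℝ // MemLr r xs ∧ lrNorm r xs ≤ 1},
    (∑' j, (∑' k, |xs.1 k (x j)| ^ s) ^ (q / s)) ^ (1 / q)

/-- `X` has (Rademacher) cotype `q`, formulated with averages over signs. -/
def HasCotype (q : ℝ) (X : Type*) [NormedAddCommGroup X] [NormedSpace ℝ X] : Prop :=
  ∃ C : ℝ, 0 < C ∧ ∀ (n : ℕ) (x : Fin n → X),
    (∑ k, ‖x k‖ ^ q) ^ (1 / q) ≤
      C * (((2 : ℝ) ^ n)⁻¹ *
        ∑ ε : Fin n → Bool, ‖∑ k, (if ε k then x k else -x k)‖ ^ 2) ^ (1 / (2 : ℝ))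

theorem stmt17 {X : Type*} [NormedAddCommGroup X] [NormedSpace ℝ X] [CompleteSpace X]
    {s q r : ℝ} (hq2 : 2 ≤ q) (hqs : q < s) (hr : 1 ≤ r) (hrs : r ≤ s)
    (hX : HasCotype q X) :
    ∀ x : ℕ → X, WeaklySummable 1 x → AnisoSummable s q r x := by
  intro x hx xs hxs
  have hq0 : (0:ℝ) < q := lt_of_lt_of_le two_pos hq2
  have hs0 : (0:ℝ) < s := hq0.trans hqs
  have hr0 : (0:ℝ) < r := lt_of_lt_of_le one_pos hr
  -- Step 1 : uniform bound on signed partial sums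
  obtain ⟨M, hM0, hM⟩ : ∃ M : ℝ, 0 ≤ M ∧ ∀ (n : ℕ) (ε : Fin n → Bool),
      ‖∑ k : Fin n, (if ε k then x k else -x k)‖ ≤ M := by
    set y : (Σ n : ℕ, Fin n → Bool) → X := fun i => ∑ k : Fin i.1, (if i.2 k then x k else -x k)
    set g : (Σ n : ℕ, Fin n → Bool) → StrongDual ℝ X →L[ℝ] ℝ :=
      fun i => NormedSpace.inclusionInDoubleDual ℝ X (y i)
    have hpt : ∀ f : StrongDual ℝ X, ∃ C, ∀ i, ‖g i f‖ ≤ C := by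
      intro f
      have hsf : Summable fun j => |f (x j)| := by
        have := hx f
        simpa [Real.rpow_one] using this
      refine ⟨∑' j, |f (x j)|, fun i => ?_⟩
      have h1 : ‖g i f‖ = |f (y i)| := by
        simp [g, Real.norm_eq_abs]
      rw [h1]
      have h2 : f (y i) = ∑ k : Fin i.1, (if i.2 k then f (x k) else -f (x k)) := by
        simp [y, map_sum, apply_ite f]
      rw [h2]
      calc |∑ k : Fin i.1, (if i.2 k then f (x k) else -f (x k))|
          ≤ ∑ k : Fin i.1, |if i.2 k then f (x k) else -f (x k)| :=
            Finset.abs_sum_le_sum_abs _ _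
        _ = ∑ k : Fin i.1, |f (x (k : ℕ))| := by
            apply Finset.sum_congr rfl; intro k _; by_cases h : i.2 k <;> simp [h]
        _ = ∑ k ∈ Finset.range i.1, |f (x k)| :=
            Fin.sum_univ_eq_sum_range (fun k => |f (x k)|) i.1
        _ ≤ ∑' j, |f (x j)| := Summable.sum_le_tsum _ (fun _ _ => abs_nonneg _) hsf
    obtain ⟨C', hC'⟩ := banach_steinhaus hpt
    refine ⟨max C' 0, le_max_right _ _, fun n ε => ?_⟩
    have hnorm : ‖y ⟨n, ε⟩‖ = ‖g ⟨n, ε⟩‖ := by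
      rw [← (NormedSpace.inclusionInDoubleDualLi ℝ (E := X)).norm_map (y ⟨n, ε⟩)]
      rfl
    calc ‖∑ k : Fin n, (if ε k then x k else -x k)‖ = ‖y ⟨n, ε⟩‖ := rfl
      _ = ‖g ⟨n, ε⟩‖ := hnorm
      _ ≤ C' := hC' _
      _ ≤ max C' 0 := le_max_left _ _
  -- Step 2 : ∑ ‖x j‖ ^ q is summable
  obtain ⟨C, hC, hcot⟩ := hX
  have hxq : Summable fun j => ‖x j‖ ^ q := by
    apply summable_of_sum_range_le (c := (C * M) ^ q)
      (fun n => Real.rpow_nonneg (norm_nonneg _) q)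
    intro n
    have h1 : (∑ k : Fin n, ‖x (k : ℕ)‖ ^ q) ^ (1 / q) ≤ C * M := by
      refine le_trans (hcot n (fun k => x (k : ℕ))) ?_
      have havg : ((2 : ℝ) ^ n)⁻¹ *
          ∑ ε : Fin n → Bool, ‖∑ k : Fin n, (if ε k then x (k : ℕ) else -x (k : ℕ))‖ ^ 2
          ≤ M ^ 2 := by
        have hsum : ∑ ε : Fin n → Bool,
            ‖∑ k : Fin n, (if ε k then x (k : ℕ) else -x (k : ℕ))‖ ^ 2
            ≤ ∑ _ε : Fin n → Bool, M ^ 2 := by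
          apply Finset.sum_le_sum
          intro ε _
          exact pow_le_pow_left₀ (norm_nonneg _) (hM n ε) 2
        have hcard : ∑ _ε : Fin n → Bool, M ^ 2 = (2 : ℝ) ^ n * M ^ 2 := by
          rw [Finset.sum_const, Finset.card_univ, Fintype.card_fun]
          simp [nsmul_eq_mul]
        calc ((2 : ℝ) ^ n)⁻¹ *
              ∑ ε : Fin n → Bool, ‖∑ k : Fin n, (if ε k then x (k : ℕ) else -x (k : ℕ))‖ ^ 2
            ≤ ((2 : ℝ) ^ n)⁻¹ * ((2 : ℝ) ^ n * M ^ 2) := by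
              apply mul_le_mul_of_nonneg_left (le_trans hsum (le_of_eq hcard))
              positivity
          _ = M ^ 2 := by field_simp
      have h2 : (((2 : ℝ) ^ n)⁻¹ *
          ∑ ε : Fin n → Bool, ‖∑ k : Fin n, (if ε k then x (k : ℕ) else -x (k : ℕ))‖ ^ 2)
          ^ (1 / (2:ℝ)) ≤ M := by
        have hnn : (0:ℝ) ≤ ((2 : ℝ) ^ n)⁻¹ *
            ∑ ε : Fin n → Bool, ‖∑ k : Fin n, (if ε k then x (k : ℕ) else -x (k : ℕ))‖ ^ 2 := by
          positivity
        calc (((2 : ℝ) ^ n)⁻¹ *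
              ∑ ε : Fin n → Bool, ‖∑ k : Fin n, (if ε k then x (k : ℕ) else -x (k : ℕ))‖ ^ 2)
              ^ (1 / (2:ℝ))
            ≤ (M ^ 2) ^ (1 / (2:ℝ)) := Real.rpow_le_rpow hnn havg (by norm_num)
          _ = M := by
              rw [← Real.rpow_natCast M 2, ← Real.rpow_mul hM0]
              norm_num
      exact mul_le_mul_of_nonneg_left h2 hC.le
    have h3 : ∑ k : Fin n, ‖x (k : ℕ)‖ ^ q ≤ (C * M) ^ q := by
      have hnn : (0:ℝ) ≤ ∑ k : Fin n, ‖x (k : ℕ)‖ ^ q := by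
        apply Finset.sum_nonneg
        intro k _
        exact Real.rpow_nonneg (norm_nonneg _) q
      have := Real.rpow_le_rpow (Real.rpow_nonneg hnn _) h1 hq0.le
      rwa [← Real.rpow_mul hnn, one_div_mul_cancel hq0.ne', Real.rpow_one] at this
    rw [← Fin.sum_univ_eq_sum_range (fun k => ‖x k‖ ^ q) n]
    exact h3
  -- Step 3 : from ℓ_r membership of xs, get ℓ_s control
  have hxs0 : ∀ k, (0:ℝ) ≤ ‖xs k‖ := fun k => norm_nonneg _
  -- a uniform bound on ‖xs k‖
  obtain ⟨B, hB0, hB⟩ : ∃ B : ℝ, 0 ≤ B ∧ ∀ k, ‖xs k‖ ≤ B := by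
    have h0 : Filter.Tendsto (fun k => ‖xs k‖ ^ r) Filter.atTop (nhds 0) :=
      hxs.tendsto_atTop_zero
    obtain ⟨B', hB'⟩ := h0.bddAbove_range
    refine ⟨max (B' ^ (1/r)) 0, le_max_right _ _, fun k => ?_⟩
    have h1 : ‖xs k‖ ^ r ≤ B' := hB' ⟨k, rfl⟩
    have h2 : (‖xs k‖ ^ r) ^ (1/r) ≤ B' ^ (1/r) :=
      Real.rpow_le_rpow (Real.rpow_nonneg (hxs0 k) r) h1 (by positivity)
    rw [← Real.rpow_mul (hxs0 k), mul_one_div_cancel hr0.ne', Real.rpow_one] at h2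
    exact le_trans h2 (le_max_left _ _)
  have hxss : Summable fun k => ‖xs k‖ ^ s := by
    refine Summable.of_nonneg_of_le (fun k => Real.rpow_nonneg (hxs0 k) s)
      (f := fun k => ‖xs k‖ ^ r * B ^ (s - r)) (fun k => ?_) (hxs.mul_right _)
    have heq : ‖xs k‖ ^ s = ‖xs k‖ ^ r * ‖xs k‖ ^ (s - r) := by
      rw [← Real.rpow_add' (hxs0 k)]
      · ring_nf
      · intro h; linarith [hr0]
    show ‖xs k‖ ^ s ≤ ‖xs k‖ ^ r * B ^ (s - r)
    rw [heq]
    apply mul_le_mul_of_nonneg_left _ (Real.rpow_nonneg (hxs0 k) r)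
    exact Real.rpow_le_rpow (hxs0 k) (hB k) (by linarith)
  set A : ℝ := ∑' k, ‖xs k‖ ^ s with hA
  have hA0 : 0 ≤ A := tsum_nonneg fun k => Real.rpow_nonneg (hxs0 k) s
  have hptbd : ∀ j k, |xs k (x j)| ^ s ≤ ‖xs k‖ ^ s * ‖x j‖ ^ s := by
    intro j k
    have h1 : |xs k (x j)| ≤ ‖xs k‖ * ‖x j‖ := by
      have := (xs k).le_opNorm (x j)
      simpa [Real.norm_eq_abs] using this
    calc |xs k (x j)| ^ s ≤ (‖xs k‖ * ‖x j‖) ^ s :=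
          Real.rpow_le_rpow (abs_nonneg _) h1 hs0.le
      _ = ‖xs k‖ ^ s * ‖x j‖ ^ s := Real.mul_rpow (hxs0 k) (norm_nonneg _)
  have hsum1 : ∀ j, Summable fun k => |xs k (x j)| ^ s := by
    intro j
    apply Summable.of_nonneg_of_le (fun k => Real.rpow_nonneg (abs_nonneg _) s) (hptbd j)
    exact hxss.mul_right _
  refine ⟨hsum1, ?_⟩
  refine Summable.of_nonneg_of_le
    (fun j => Real.rpow_nonneg (tsum_nonneg fun k => Real.rpow_nonneg (abs_nonneg _) s) _)
    (f := fun j => A ^ (q/s) * ‖x j‖ ^ q) (fun j => ?_) (hxq.mul_left _)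
  have h1 : ∑' k, |xs k (x j)| ^ s ≤ A * ‖x j‖ ^ s := by
    calc ∑' k, |xs k (x j)| ^ s ≤ ∑' k, ‖xs k‖ ^ s * ‖x j‖ ^ s :=
          Summable.tsum_le_tsum (hptbd j) (hsum1 j) (hxss.mul_right _)
      _ = A * ‖x j‖ ^ s := by rw [tsum_mul_right]
  have h2 : (∑' k, |xs k (x j)| ^ s) ^ (q/s) ≤ (A * ‖x j‖ ^ s) ^ (q/s) :=
    Real.rpow_le_rpow (tsum_nonneg fun k => Real.rpow_nonneg (abs_nonneg _) s) h1
      (by positivity)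
  refine le_trans h2 (le_of_eq ?_)
  rw [Real.mul_rpow hA0 (Real.rpow_nonneg (norm_nonneg _) s),
    ← Real.rpow_mul (norm_nonneg _), mul_div_cancel₀ q hs0.ne']
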